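/- For the Stieltjes case, the Nevanlinna function B satisfies for all x ≤ 0 the lower bound B(x) ≥ x(x − a_0)/b_0² − 1, and D satisfies the upper bound D(x) ≤ x. Consequently B(x) → +∞ and D(x) → −∞ as x → −∞, B has a smallest zero β_1 < 0, and D has smallest zero δ_1 = 0. -/

import Mathlib

open Filter Topology

/-- Bounds `B(x) ≥ x(x−a₀)/b₀² − 1` and `D(x) ≤ x` for `x ≤ 0`,
hence `B(x) → +∞`, `D(x) → −∞` as `x → −∞`, `B` has a smallest zero `β₁ < 0`,
and `D` has smallest zero `δ₁ = 0`. -/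
theorem stmt5 (P Q : ℕ → ℝ → ℝ) (B D : ℝ → ℝ) (a₀ b₀ : ℝ)
    (ha₀ : 0 ≤ a₀) (hb₀ : 0 < b₀)
    (hP0 : ∀ x, P 0 x = 1) (hQ0 : ∀ x, Q 0 x = 0)
    (hP1 : ∀ x, P 1 x = (x - a₀) / b₀) (hQ1 : ∀ x, Q 1 x = 1 / b₀)
    (hsummB : ∀ x : ℝ, Summable (fun k => P k x * Q k 0))
    (hsummD : ∀ x : ℝ, Summable (fun k => P k x * P k 0))
    (hB : ∀ x : ℝ, B x = -1 + x * ∑' k, P k x * Q k 0)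
    (hD : ∀ x : ℝ, D x = x * ∑' k, P k x * P k 0)
    (hsignPQ : ∀ k, 1 ≤ k → ∀ x : ℝ, x ≤ 0 → P k x * Q k 0 < 0)
    (hsignPP : ∀ k, 1 ≤ k → ∀ x : ℝ, x ≤ 0 → 0 < P k x * P k 0)
    (hBcont : Continuous B) :
    (∀ x : ℝ, x ≤ 0 → x * (x - a₀) / b₀ ^ 2 - 1 ≤ B x ∧ D x ≤ x) ∧
    Tendsto B atBot atTop ∧ Tendsto D atBot atBot ∧
    (∃ β₁ : ℝ, β₁ < 0 ∧ B β₁ = 0 ∧ ∀ x : ℝ, B x = 0 → β₁ ≤ x) ∧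
    (D 0 = 0 ∧ ∀ x : ℝ, x < 0 → D x ≠ 0) := by
  have hb₀' : b₀ ≠ 0 := hb₀.ne'
  -- bound on the B-series
  have hSB : ∀ x : ℝ, x ≤ 0 → ∑' k, P k x * Q k 0 ≤ (x - a₀) / b₀ ^ 2 := by
    intro x hx
    have hsum := hsummB x
    have h1 : Summable (fun k => P (k + 1) x * Q (k + 1) 0) :=
      (summable_nat_add_iff 1).2 hsum
    have e1 : ∑' k, P k x * Q k 0 = P 0 x * Q 0 0 + ∑' k, P (k + 1) x * Q (k + 1) 0 :=
      Summable.tsum_eq_zero_add hsum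
    have e2 : ∑' k, P (k + 1) x * Q (k + 1) 0
        = P 1 x * Q 1 0 + ∑' k, P (k + 2) x * Q (k + 2) 0 := by
      simpa using Summable.tsum_eq_zero_add h1
    have htail : ∑' k, P (k + 2) x * Q (k + 2) 0 ≤ 0 :=
      tsum_nonpos fun k => (hsignPQ (k + 2) (by omega) x hx).le
    have hv1 : P 1 x * Q 1 0 = (x - a₀) / b₀ ^ 2 := by
      rw [hP1, hQ1, div_mul_div_comm, mul_one, sq]
    rw [e1, e2, hP0, hQ0, hv1]
    linarith
  -- bound on the D-series
  have hSD : ∀ x : ℝ, x ≤ 0 → (1 : ℝ) ≤ ∑' k, P k x * P k 0 := by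
    intro x hx
    have hsum := hsummD x
    have e1 : ∑' k, P k x * P k 0 = P 0 x * P 0 0 + ∑' k, P (k + 1) x * P (k + 1) 0 :=
      Summable.tsum_eq_zero_add hsum
    have htail : 0 ≤ ∑' k, P (k + 1) x * P (k + 1) 0 :=
      tsum_nonneg fun k => (hsignPP (k + 1) (by omega) x hx).le
    rw [e1, hP0, hP0]
    linarith
  -- pointwise bounds
  have hbound : ∀ x : ℝ, x ≤ 0 → x * (x - a₀) / b₀ ^ 2 - 1 ≤ B x ∧ D x ≤ x := by
    intro x hx
    constructor
    · rw [hB]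
      have h := mul_le_mul_of_nonpos_left (hSB x hx) hx
      have key : x * ((x - a₀) / b₀ ^ 2) = x * (x - a₀) / b₀ ^ 2 := by ring
      linarith
    · rw [hD]
      have h := mul_le_mul_of_nonpos_left (hSD x hx) hx
      linarith
  -- tendsto of the lower bound
  have hq : Tendsto (fun x : ℝ => x * (x - a₀) / b₀ ^ 2 - 1) atBot atTop := by
    have hsub : Tendsto (fun x : ℝ => x - a₀) atBot atBot := by
      simpa [sub_eq_add_neg] using tendsto_atBot_add_const_right atBot (-a₀) tendsto_id
    have h1 : Tendsto (fun x : ℝ => x * (x - a₀)) atBot atTop :=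
      Tendsto.atBot_mul_atBot₀ tendsto_id hsub
    have h2 : Tendsto (fun x : ℝ => x * (x - a₀) / b₀ ^ 2) atBot atTop :=
      h1.atTop_div_const (by positivity)
    simpa [sub_eq_add_neg] using tendsto_atTop_add_const_right atBot (-1 : ℝ) h2
  have hBt : Tendsto B atBot atTop :=
    tendsto_atTop_mono' atBot ((eventually_le_atBot 0).mono fun x hx => (hbound x hx).1) hq
  have hDt : Tendsto D atBot atBot :=
    tendsto_atBot_mono' atBot ((eventually_le_atBot 0).mono fun x hx => (hbound x hx).2)
      tendsto_id
  have hB0 : B 0 = -1 := by rw [hB]; simp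
  -- find a zero of B
  obtain ⟨M, hMpos, hM0⟩ : ∃ M : ℝ, 0 < B M ∧ M ≤ 0 :=
    ((hBt.eventually_gt_atTop 0).and (eventually_le_atBot 0)).exists
  have hIVT := intermediate_value_Icc' hM0 hBcont.continuousOn
  have h0mem : (0 : ℝ) ∈ Set.Icc (B 0) (B M) := ⟨by rw [hB0]; norm_num, hMpos.le⟩
  obtain ⟨c, hc, hc0⟩ := hIVT h0mem
  have hcne : c ≠ 0 := by
    intro h
    rw [h, hB0] at hc0
    norm_num at hc0
  have hclt : c < 0 := lt_of_le_of_ne hc.2 hcne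
  -- smallest zero
  obtain ⟨L, hL⟩ := eventually_atBot.1 (hBt.eventually_gt_atTop 0)
  have hbdd : BddBelow {x : ℝ | B x = 0} := by
    refine ⟨L, fun x hx => ?_⟩
    by_contra h
    exact (hL x (le_of_not_ge fun h' => h h')).ne' hx
  have hne : Set.Nonempty {x : ℝ | B x = 0} := ⟨c, hc0⟩
  have hclosed : IsClosed {x : ℝ | B x = 0} := isClosed_eq hBcont continuous_const
  have hmem : sInf {x : ℝ | B x = 0} ∈ {x : ℝ | B x = 0} := hclosed.csInf_mem hne hbdd
  refine ⟨hbound, hBt, hDt, ⟨sInf {x : ℝ | B x = 0}, ?_, hmem, fun x hx => csInf_le hbdd hx⟩,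
    ?_, ?_⟩
  · exact lt_of_le_of_lt (csInf_le hbdd hc0) hclt
  · rw [hD]; simp
  · intro x hx
    have := (hbound x hx.le).2
    exact (by linarith : D x < 0).ne
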